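/- Let σ, σ̃ be distinct letters from AP \ {wht, shdw} and let p_φ ∈ AP be a letter occurring in no position of w. Suppose w is a strongly shadowy word such that only even (white) positions of w contain σ, only odd (shadow) positions contain σ̃, and for every even position p with p+1 < |w|: σ ∈ w_p iff σ̃ ∈ w_{p+1} (i.e., w satisfies φ_transfer^{σ,σ̃}). Let w' be the word obtained from w by adding p_φ to exactly those positions j that satisfy [wht ∈ w_j and σ ∈ w_j] or [shdw ∈ w_j and σ̃ ∉ w_j]. Then w' is strongly shadowy. -/

import Mathlib

/- STATEMENT 18: Adding a fresh letter p_φ to exactly the positions satisfying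
[wht ∧ σ] ∨ [shdw ∧ ¬σ̃] preserves strong shadowness (Lemma on dehalfication of
φ_transfer). -/

namespace MFL18

abbrev Word := List (Set ℕ)

noncomputable def cnt (w : Word) (a : ℕ) (i : ℕ) : ℕ :=
  Set.ncard {j | j < i ∧ a ∈ w.getD j ∅}

def Shadowy (wht shdw : ℕ) (w : Word) : Prop :=
  Even w.length ∧
  (∀ j < w.length, Even j → wht ∈ w.getD j ∅ ∧ shdw ∉ w.getD j ∅) ∧
  (∀ j < w.length, Odd j → shdw ∈ w.getD j ∅ ∧ wht ∉ w.getD j ∅)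

def StronglyShadowy (wht shdw : ℕ) (w : Word) : Prop :=
  Shadowy wht shdw w ∧
  (∀ i < w.length, Even i → ∀ τ : ℕ, cnt w τ i ≤ cnt w wht i ∧ cnt w τ i ≤ cnt w shdw i) ∧
  (∀ i < w.length, Odd i → ∀ τ : ℕ, cnt w τ i ≤ cnt w wht i)

open Classical in
/-- The word obtained from `w` by adding `pφ` to exactly those positions whose label
satisfies `[wht ∧ σ] ∨ [shdw ∧ ¬σ̃]`. -/
noncomputable def addLetter (pφ wht shdw σ σt : ℕ) (w : Word) : Word :=
  w.map (fun s => if (wht ∈ s ∧ σ ∈ s) ∨ (shdw ∈ s ∧ σt ∉ s) then insert pφ s else s)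

open Classical in
lemma cnt_eq (w : Word) (a i : ℕ) :
    cnt w a i = ((Finset.range i).filter (fun j => a ∈ w.getD j ∅)).card := by
  classical
  have : {j | j < i ∧ a ∈ w.getD j ∅} =
      ↑((Finset.range i).filter (fun j => a ∈ w.getD j ∅)) := by
    ext j; simp [Finset.mem_filter, and_comm]
  rw [cnt, this, Set.ncard_coe_finset]

lemma getD_map_of_fix (f : Set ℕ → Set ℕ) (hf : f ∅ = ∅) (w : Word) (j : ℕ) :
    (w.map f).getD j ∅ = f (w.getD j ∅) := by
  simp only [List.getD, List.getElem?_map]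
  rcases hw : w[j]? with _ | v <;> simp [hw, hf]

lemma pair_count (P : ℕ → Prop) [DecidablePred P] :
    ∀ k, (∀ m < k, (P (2*m) ↔ ¬ P (2*m+1))) →
      ((Finset.range (2*k)).filter P).card = k := by
  intro k
  induction k with
  | zero => simp
  | succ k ih =>
    intro h
    have h2 : 2*(k+1) = (2*k+1)+1 := by ring
    rw [h2, Finset.range_add_one, Finset.range_add_one, Finset.filter_insert, Finset.filter_insert]
    have hk := h k (by omega)
    have hcard := ih (fun m hm => h m (by omega))
    by_cases hP : P (2*k)
    · have : ¬ P (2*k+1) := hk.mp hP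
      rw [if_neg this, if_pos hP, Finset.card_insert_of_notMem (by simp), hcard]
    · have : P (2*k+1) := by tauto
      rw [if_pos this, if_neg hP, Finset.card_insert_of_notMem (by simp), hcard]

open Classical in
theorem addLetter_stronglyShadowy
    (wht shdw σ σt pφ : ℕ)
    (hws : wht ≠ shdw) (hσσt : σ ≠ σt)
    (hσw : σ ≠ wht) (hσs : σ ≠ shdw) (hσtw : σt ≠ wht) (hσts : σt ≠ shdw)
    (w : Word)
    (hfresh : ∀ s ∈ w, pφ ∉ s)
    (hstrong : StronglyShadowy wht shdw w)
    (honlyσ : ∀ j < w.length, σ ∈ w.getD j ∅ → Even j)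
    (honlyσt : ∀ j < w.length, σt ∈ w.getD j ∅ → Odd j)
    (htransfer : ∀ p, Even p → p + 1 < w.length →
        (σ ∈ w.getD p ∅ ↔ σt ∈ w.getD (p + 1) ∅)) :
    StronglyShadowy wht shdw (addLetter pφ wht shdw σ σt w) := by
  classical
  obtain ⟨⟨hev, hE, hO⟩, hcE, hcO⟩ := hstrong
  rcases eq_or_ne w [] with rfl | hne
  · refine ⟨⟨by simp [addLetter], ?_, ?_⟩, ?_, ?_⟩ <;> simp [addLetter]
  -- basic facts
  have hpos : 0 < w.length := List.length_pos_iff.mpr hne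
  have h2le : 2 ≤ w.length := by
    rcases hev with ⟨n, hn⟩; omega
  have hget_mem : ∀ j < w.length, w.getD j ∅ ∈ w := by
    intro j hj
    rw [List.getD_eq_getElem _ _ hj]
    exact List.getElem_mem hj
  have hpfresh : ∀ j, pφ ∉ w.getD j ∅ := by
    intro j
    by_cases hj : j < w.length
    · exact hfresh _ (hget_mem j hj)
    · rw [List.getD_eq_default _ _ (by omega)]; simp
  have hpw : pφ ≠ wht := by
    intro h; exact hpfresh 0 (h ▸ (hE 0 hpos Even.zero).1)
  have hps : pφ ≠ shdw := by
    intro h; exact hpfresh 1 (h ▸ (hO 1 (by omega) odd_one).1)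
  set Cond : Set ℕ → Prop :=
    fun s => (wht ∈ s ∧ σ ∈ s) ∨ (shdw ∈ s ∧ σt ∉ s) with hCond
  set f : Set ℕ → Set ℕ :=
    fun s => if (wht ∈ s ∧ σ ∈ s) ∨ (shdw ∈ s ∧ σt ∉ s) then insert pφ s else s with hf
  have hW : addLetter pφ wht shdw σ σt w = w.map f := rfl
  have hf0 : f ∅ = ∅ := by simp [hf]
  have hgetD : ∀ j, (w.map f).getD j ∅ = f (w.getD j ∅) :=
    getD_map_of_fix f hf0 w
  have hmemf : ∀ (a : ℕ) (s : Set ℕ), a ∈ f s ↔ (a ∈ s ∨ (a = pφ ∧ Cond s)) := by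
    intro a s
    simp only [hf, hCond]
    split_ifs with hc
    · simp only [Set.mem_insert_iff]; tauto
    · tauto
  have hmem : ∀ (a : ℕ) (j : ℕ),
      a ∈ (w.map f).getD j ∅ ↔ (a ∈ w.getD j ∅ ∨ (a = pφ ∧ Cond (w.getD j ∅))) := by
    intro a j
    rw [hgetD]
    exact hmemf a _
  have hmem' : ∀ (a : ℕ), a ≠ pφ → ∀ j, (a ∈ (w.map f).getD j ∅ ↔ a ∈ w.getD j ∅) := by
    intro a ha j
    rw [hmem]; simp [ha]
  have hmemp : ∀ j, (pφ ∈ (w.map f).getD j ∅ ↔ Cond (w.getD j ∅)) := by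
    intro j
    rw [hmem]
    exact ⟨fun h => h.elim (fun h' => absurd h' (hpfresh j)) (fun h' => h'.2),
      fun h => Or.inr ⟨rfl, h⟩⟩
  have hcnt' : ∀ (a : ℕ), a ≠ pφ → ∀ i, cnt (w.map f) a i = cnt w a i := by
    intro a ha i
    rw [cnt_eq, cnt_eq]
    congr 1
    exact Finset.filter_congr (fun j _ => hmem' a ha j)
  have hlen : (w.map f).length = w.length := List.length_map _
  -- shadowy facts as iffs
  have hwmem : ∀ j < w.length, (wht ∈ w.getD j ∅ ↔ Even j) := by
    intro j hj
    constructor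
    · intro h
      by_contra hodd
      exact (hO j hj (Nat.not_even_iff_odd.mp hodd)).2 h
    · intro h; exact (hE j hj h).1
  have hsmem : ∀ j < w.length, (shdw ∈ w.getD j ∅ ↔ Odd j) := by
    intro j hj
    constructor
    · intro h
      by_contra heven
      exact (hE j hj (Nat.not_odd_iff_even.mp heven)).2 h
    · intro h; exact (hO j hj h).1
  -- Cond on even / odd positions
  have hCondEven : ∀ m, 2*m < w.length → (Cond (w.getD (2*m) ∅) ↔ σ ∈ w.getD (2*m) ∅) := by
    intro m hm
    have h1 := hE (2*m) hm (even_two_mul m)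
    simp only [hCond]
    have h2 := h1.1; have h3 := h1.2
    tauto
  have hCondOdd : ∀ m, 2*m+1 < w.length → (Cond (w.getD (2*m+1) ∅) ↔ σt ∉ w.getD (2*m+1) ∅) := by
    intro m hm
    have h1 := hO (2*m+1) hm (by exact odd_two_mul_add_one m)
    simp only [hCond]
    have h2 := h1.1; have h3 := h1.2
    tauto
  have hpair : ∀ m, 2*m+1 < w.length →
      (Cond (w.getD (2*m) ∅) ↔ ¬ Cond (w.getD (2*m+1) ∅)) := by
    intro m hm
    rw [hCondEven m (by omega), hCondOdd m hm,
      htransfer (2*m) (even_two_mul m) hm]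
    tauto
  -- counts of wht, shdw over even prefixes
  have hcw : ∀ k, 2*k ≤ w.length →
      ((Finset.range (2*k)).filter (fun j => wht ∈ w.getD j ∅)).card = k := by
    intro k hk
    apply pair_count
    intro m hm
    rw [hwmem (2*m) (by omega), hwmem (2*m+1) (by omega)]
    simp [Nat.even_add_one, parity_simps]
  have hcs : ∀ k, 2*k ≤ w.length →
      ((Finset.range (2*k)).filter (fun j => shdw ∈ w.getD j ∅)).card = k := by
    intro k hk
    apply pair_count
    intro m hm
    rw [hsmem (2*m) (by omega), hsmem (2*m+1) (by omega)]
    simp [Nat.odd_add_one, parity_simps]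
  have hcc : ∀ k, 2*k ≤ w.length →
      ((Finset.range (2*k)).filter (fun j => Cond (w.getD j ∅))).card = k := by
    intro k hk
    apply pair_count
    intro m hm
    exact hpair m (by omega)
  -- count of pφ in the new word
  have hcntp : ∀ i, cnt (w.map f) pφ i =
      ((Finset.range i).filter (fun j => Cond (w.getD j ∅))).card := by
    intro i
    rw [cnt_eq]
    congr 1
    exact Finset.filter_congr (fun j _ => hmemp j)
  rw [hW]
  refine ⟨⟨by rwa [hlen], ?_, ?_⟩, ?_, ?_⟩
  · intro j hj hjE
    rw [hlen] at hj
    rw [hmem' wht hpw.symm j, hmem' shdw hps.symm j]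
    exact hE j hj hjE
  · intro j hj hjO
    rw [hlen] at hj
    rw [hmem' shdw hps.symm j, hmem' wht hpw.symm j]
    exact hO j hj hjO
  · intro i hi hiE τ
    rw [hlen] at hi
    rw [hcnt' wht hpw.symm, hcnt' shdw hps.symm]
    rcases eq_or_ne τ pφ with rfl | hτ
    · obtain ⟨k, hk⟩ := hiE
      have hk2 : i = 2*k := by omega
      subst hk2
      rw [hcntp, hcc k (by omega), cnt_eq, cnt_eq, hcw k (by omega), hcs k (by omega)]
      exact ⟨le_refl k, le_refl k⟩
    · rw [hcnt' τ hτ]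
      exact hcE i hi hiE τ
  · intro i hi hiO τ
    rw [hlen] at hi
    rw [hcnt' wht hpw.symm]
    rcases eq_or_ne τ pφ with rfl | hτ
    · obtain ⟨k, hk⟩ := hiO
      have hk2 : i = 2*k+1 := by omega
      subst hk2
      have h1 : ((Finset.range (2*k+1)).filter (fun j => wht ∈ w.getD j ∅)).card = k+1 := by
        rw [Finset.range_add_one, Finset.filter_insert,
          if_pos ((hwmem _ (by omega)).mpr (even_two_mul k)),
          Finset.card_insert_of_notMem (by simp), hcw k (by omega)]
      have h2 : ((Finset.range (2*k+1)).filter (fun j => Cond (w.getD j ∅))).card ≤ k+1 := by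
        rw [Finset.range_add_one, Finset.filter_insert]
        split
        · rw [Finset.card_insert_of_notMem (by simp), hcc k (by omega)]
        · rw [hcc k (by omega)]; omega
      rw [hcntp, cnt_eq, h1]
      exact h2
    · rw [hcnt' τ hτ]
      exact hcO i hi hiO τ

end MFL18
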